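/- Let p be a prime, d, r ∈ ℕ, and A = {1,…,p−1}. Then s_{A,≤d}(C_p^r) − 1 is equal to the maximum n such that there exists an [n, n−r]_p-code of minimum distance at least d + 1 (when one side is infinite, so is the other). -/

import Mathlib

open scoped BigOperators

/-- `l` encodes a `W`-weighted zero-subsum of the sequence (multiset) `S`:
a nonempty list of (weight, group element) pairs with weights in `W`, whose
group elements form a sub-multiset of `S` and whose weighted sum is zero. -/
def IsWZeroSubsum {G : Type*} [AddCommGroup G] (W : Set ℤ) (S : Multiset G)
    (l : List (ℤ × G)) : Prop :=
  l ≠ [] ∧ (∀ p ∈ l, p.1 ∈ W) ∧ (↑(l.map Prod.snd) : Multiset G) ≤ S ∧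
    (l.map fun p => p.1 • p.2).sum = 0

/-- `S` has a `W`-weighted zero-subsum whose length lies in `L`. -/
def HasWZeroSubsumLen {G : Type*} [AddCommGroup G] (W : Set ℤ) (S : Multiset G)
    (L : Set ℕ) : Prop :=
  ∃ l : List (ℤ × G), IsWZeroSubsum W S l ∧ l.length ∈ L

/-- `S` has `m` pairwise disjoint `W`-weighted zero-subsums. -/
def HasDisjointWZeroSubsums {G : Type*} [AddCommGroup G] (W : Set ℤ) (S : Multiset G)
    (m : ℕ) : Prop :=
  ∃ ls : List (List (ℤ × G)), ls.length = m ∧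
    (∀ l ∈ ls, l ≠ [] ∧ (∀ p ∈ l, p.1 ∈ W) ∧ (l.map fun p => p.1 • p.2).sum = 0) ∧
    (↑(ls.flatten.map Prod.snd) : Multiset G) ≤ S

/-- The `m`-wise `W`-weighted Davenport constant `D_{W,m}(G)`. -/
noncomputable def DW (W : Set ℤ) (G : Type*) [AddCommGroup G] (m : ℕ) : ℕ :=
  sInf {n : ℕ | ∀ S : Multiset G, n ≤ Multiset.card S → HasDisjointWZeroSubsums W S m}

/-- The `L`-constrained `W`-weighted Davenport constant `s_{W,L}(G)`, valued in `ℕ∞`. -/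
noncomputable def sWL (W : Set ℤ) (G : Type*) [AddCommGroup G] (L : Set ℕ) : ℕ∞ :=
  sInf {N : ℕ∞ | ∃ n : ℕ, N = (n : ℕ∞) ∧
    ∀ S : Multiset G, n ≤ Multiset.card S → HasWZeroSubsumLen W S L}

/-- The `d`-constrained `W`-weighted Davenport constant `s_{W,≤d}(G)`. -/
noncomputable def sWle (W : Set ℤ) (G : Type*) [AddCommGroup G] (d : ℕ) : ℕ∞ :=
  sWL W G {t | 1 ≤ t ∧ t ≤ d}

/-- `e_W(G)`: the smallest `t ≥ 1` such that some `t` weights from `W` sum to a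
multiple of `exp(G)`. -/
noncomputable def eW (W : Set ℤ) (G : Type*) [AddCommGroup G] : ℕ :=
  sInf {t : ℕ | 1 ≤ t ∧ ∃ w : Fin t → ℤ, (∀ i, w i ∈ W) ∧
    ((AddMonoid.exponent G : ℤ) ∣ ∑ i, w i)}

/-- `W` is multiplicatively closed modulo `n`. -/
def MulClosedMod (W : Set ℤ) (n : ℕ) : Prop :=
  ∀ w ∈ W, ∀ w' ∈ W, ∃ u ∈ W, (n : ℤ) ∣ w * w' - u

-- ===== helpers =====

lemma lemM {α β : Type*} [DecidableEq α] [DecidableEq β] (g : β → α) :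
    ∀ (l : List (ℤ × α)) (s : Multiset β),
    (↑(l.map Prod.snd) : Multiset α) ≤ s.map g →
    ∃ q : List (ℤ × β), (q.map fun x => (x.1, g x.2)).Perm l ∧
      (↑(q.map Prod.snd) : Multiset β) ≤ s := by
  intro l
  induction l with
  | nil => exact fun s _ => ⟨[], List.Perm.refl _, by simp⟩
  | cons hd tl ih =>
    intro s hle
    have hmem : hd.2 ∈ s.map g := by
      refine Multiset.mem_of_le hle ?_
      simp
    obtain ⟨b, hb, hgb⟩ := Multiset.mem_map.1 hmem
    have hs : s = b ::ₘ s.erase b := (Multiset.cons_erase hb).symm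
    have htl : (↑(tl.map Prod.snd) : Multiset α) ≤ (s.erase b).map g := by
      have h2 : (hd.2 ::ₘ ↑(tl.map Prod.snd) : Multiset α) ≤ g b ::ₘ (s.erase b).map g := by
        rw [← Multiset.map_cons, ← hs]
        simpa using hle
      rw [hgb] at h2
      exact (Multiset.cons_le_cons_iff _).1 h2
    obtain ⟨q, hperm, hq⟩ := ih (s.erase b) htl
    refine ⟨(hd.1, b) :: q, ?_, ?_⟩
    · simpa [hgb] using hperm.cons (hd.1, g b)
    · rw [hs]
      simpa using Multiset.cons_le_cons b hq

lemma xval {R : Type*} [CommRing R] {ι : Type*} [DecidableEq ι] :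
    ∀ (q : List (ℤ × ι)), (q.map Prod.snd).Nodup →
    (∀ pr ∈ q,
      (q.map fun pr' => ((pr'.1 : R) • (Pi.single pr'.2 1 : ι → R))).sum pr.2 = (pr.1 : R)) ∧
    (∀ i, i ∉ q.map Prod.snd →
      (q.map fun pr' => ((pr'.1 : R) • (Pi.single pr'.2 1 : ι → R))).sum i = 0) := by
  intro q
  induction q with
  | nil => exact fun _ => ⟨by simp, by simp⟩
  | cons hd tl ih =>
    intro hnd
    rw [List.map_cons, List.nodup_cons] at hnd
    obtain ⟨hhd, hnd'⟩ := hnd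
    obtain ⟨ih1, ih2⟩ := ih hnd'
    constructor
    · rintro pr hpr
      rcases List.mem_cons.1 hpr with h | h
      · subst h
        simp [List.sum_cons, ih2 _ hhd]
      · have hne : hd.2 ≠ pr.2 := by
          intro he
          exact hhd (he ▸ List.mem_map_of_mem (f := Prod.snd) h)
        simp [List.sum_cons, ih1 pr h, Pi.single_apply, hne]
    · intro i hi
      rw [List.map_cons, List.mem_cons] at hi
      push_neg at hi
      have hne : hd.2 ≠ i := Ne.symm hi.1
      simp [List.sum_cons, ih2 i hi.2, Pi.single_apply, hne]

lemma exists_sub {F V : Type*} [Field F] [AddCommGroup V] [Module F V]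
    [FiniteDimensional F V] (K : Submodule F V) (k : ℕ) (hk : k ≤ Module.finrank F K) :
    ∃ C : Submodule F V, C ≤ K ∧ Module.finrank F C = k := by
  classical
  let b := Module.finBasis F K
  let f : Fin k → V := fun j => (b (Fin.castLE hk j) : V)
  have hinj : Function.Injective (Fin.castLE hk) := Fin.castLE_injective hk
  have hli : LinearIndependent F f := by
    have h1 : LinearIndependent F fun i => ((b i : K) : V) :=
      b.linearIndependent.map' K.subtype (Submodule.ker_subtype K)
    exact h1.comp _ hinj
  refine ⟨Submodule.span F (Set.range f), ?_, ?_⟩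
  · rw [Submodule.span_le]
    rintro _ ⟨j, rfl⟩
    exact (b (Fin.castLE hk j)).2
  · rw [finrank_span_eq_card hli]
    simp

section Main

variable (p d r : ℕ) [Fact p.Prime]

lemma castW_ne_zero {w : ℤ} (hw : w ∈ Set.Icc 1 ((p : ℤ) - 1)) : (w : ZMod p) ≠ 0 := by
  have hp := (Fact.out : p.Prime)
  intro h0
  rw [ZMod.intCast_zmod_eq_zero_iff_dvd] at h0
  have h1 := Int.le_of_dvd (by linarith [hw.1]) h0
  have : (2 : ℤ) ≤ p := by exact_mod_cast hp.two_le
  linarith [hw.1, hw.2]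

lemma val_mem_W {x : ZMod p} (hx : x ≠ 0) : ((x.val : ℤ)) ∈ Set.Icc 1 ((p : ℤ) - 1) := by
  have hp := (Fact.out : p.Prime)
  haveI : NeZero p := ⟨hp.pos.ne'⟩
  have h1 : x.val ≠ 0 := by
    simpa [ZMod.val_eq_zero] using hx
  have h2 : x.val < p := ZMod.val_lt x
  constructor
  · exact_mod_cast Nat.one_le_iff_ne_zero.2 h1
  · have : (x.val : ℤ) < p := by exact_mod_cast h2
    omega

/-- the code property -/
def Good (n : ℕ) : Prop :=
  ∃ C : Submodule (ZMod p) (Fin n → ZMod p),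
    Module.finrank (ZMod p) C = n - r ∧
    ∀ c ∈ C, c ≠ 0 → d + 1 ≤ hammingNorm c

lemma good_r : Good p d r r := by
  refine ⟨⊥, by simp, ?_⟩
  intro c hc hc0
  exact absurd ((Submodule.mem_bot _).1 hc) hc0

/-- sequence with no short zero-subsum gives a good code -/
lemma seq_good (n : ℕ) (g : Fin n → (Fin r → ZMod p))
    (hno : ¬ HasWZeroSubsumLen (Set.Icc 1 ((p : ℤ) - 1))
      ((List.ofFn g : List (Fin r → ZMod p)) : Multiset (Fin r → ZMod p))
      {t | 1 ≤ t ∧ t ≤ d}) : Good p d r n := by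
  classical
  set φ : (Fin n → ZMod p) →ₗ[ZMod p] (Fin r → ZMod p) :=
    Fintype.linearCombination (ZMod p) g with hφ
  have hrk : n - r ≤ Module.finrank (ZMod p) (LinearMap.ker φ) := by
    have h1 := LinearMap.finrank_range_add_finrank_ker φ
    have h2 : Module.finrank (ZMod p) (Fin n → ZMod p) = n := by
      simp [Module.finrank_pi]
    have h3 : Module.finrank (ZMod p) (LinearMap.range φ) ≤ r := by
      have := Submodule.finrank_le (LinearMap.range φ)
      simpa [Module.finrank_pi] using this
    omega
  obtain ⟨C, hCK, hCrk⟩ := exists_sub (LinearMap.ker φ) (n - r) hrk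
  refine ⟨C, hCrk, ?_⟩
  intro c hc hc0
  by_contra hlt
  push_neg at hlt
  have hnorm_le : hammingNorm c ≤ d := by omega
  apply hno
  set supp : Finset (Fin n) := Finset.filter (fun i => c i ≠ 0) Finset.univ with hsupp
  have hsupp_card : supp.card = hammingNorm c := rfl
  refine ⟨supp.toList.map (fun i => (((c i).val : ℤ), g i)), ⟨?_, ?_, ?_, ?_⟩, ?_⟩
  · -- nonempty
    obtain ⟨i, hi⟩ := Function.ne_iff.1 hc0
    have hi' : c i ≠ 0 := by simpa using hi
    have : i ∈ supp := by simp [hsupp, hi']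
    intro hnil
    rw [List.map_eq_nil_iff] at hnil
    rw [← Finset.mem_toList, hnil] at this
    exact List.not_mem_nil this
  · -- weights
    rintro pr hpr
    rw [List.mem_map] at hpr
    obtain ⟨i, hi, rfl⟩ := hpr
    rw [Finset.mem_toList, hsupp, Finset.mem_filter] at hi
    exact val_mem_W p hi.2
  · -- submultiset
    rw [List.map_map]
    have h2 : Prod.snd ∘ (fun i => ((((c i).val : ℤ)), g i)) = g := rfl
    rw [h2]
    have e1 : (↑(supp.toList.map g) : Multiset (Fin r → ZMod p)) = Multiset.map g supp.val := by
      rw [← Finset.coe_toList supp, Multiset.map_coe]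
    have e2 : (↑(List.ofFn g) : Multiset (Fin r → ZMod p))
        = Multiset.map g (Finset.univ : Finset (Fin n)).val := by
      rw [List.ofFn_eq_map]
      rfl
    rw [e1, e2]
    exact Multiset.map_le_map (Finset.val_le_iff.2 (Finset.subset_univ supp))
  · -- sum zero
    rw [List.map_map]
    have h2 : ((fun pr : ℤ × (Fin r → ZMod p) => pr.1 • pr.2) ∘ fun i => (((c i).val : ℤ), g i))
        = fun i => ((c i).val : ℤ) • g i := rfl
    rw [h2, Finset.sum_map_toList]
    have h3 : ∀ i ∈ supp, ((c i).val : ℤ) • g i = c i • g i := by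
      intro i _
      rw [← Int.cast_smul_eq_zsmul (ZMod p)]
      congr 1
      push_cast
      simp [ZMod.natCast_val, ZMod.cast_id]
    rw [Finset.sum_congr rfl h3]
    have h4 : ∑ i ∈ supp, c i • g i = ∑ i, c i • g i := by
      apply Finset.sum_subset (Finset.subset_univ supp)
      intro i _ hi
      have : c i = 0 := by
        by_contra hc'
        exact hi (by simp [hsupp, hc'])
      simp [this]
    rw [h4]
    have hker : φ c = 0 := hCK hc
    rw [hφ, Fintype.linearCombination_apply] at hker
    exact hker
  · -- length
    have hlen : (supp.toList.map (fun i => (((c i).val : ℤ), g i))).length = hammingNorm c := by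
      rw [List.length_map, Finset.length_toList, hsupp_card]
    rw [hlen]
    exact ⟨by have := hammingNorm_pos_iff.2 hc0; omega, hnorm_le⟩

/-- good code gives a sequence with no short zero-subsum -/
lemma good_seq (n : ℕ) (hrn : r ≤ n) (hG : Good p d r n) :
    ∃ S : Multiset (Fin r → ZMod p), Multiset.card S = n ∧
      ¬ HasWZeroSubsumLen (Set.Icc 1 ((p : ℤ) - 1)) S {t | 1 ≤ t ∧ t ≤ d} := by
  classical
  obtain ⟨C, hCrk, hdist⟩ := hG
  have hQr : Module.finrank (ZMod p) ((Fin n → ZMod p) ⧸ C) = r := by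
    have h1 := Submodule.finrank_quotient_add_finrank C
    have h2 : Module.finrank (ZMod p) (Fin n → ZMod p) = n := by simp [Module.finrank_pi]
    rw [h2, hCrk] at h1
    omega
  let e : ((Fin n → ZMod p) ⧸ C) ≃ₗ[ZMod p] (Fin r → ZMod p) :=
    LinearEquiv.ofFinrankEq _ _ (by rw [hQr]; simp [Module.finrank_pi])
  let ψ : (Fin n → ZMod p) →ₗ[ZMod p] (Fin r → ZMod p) := e.toLinearMap ∘ₗ C.mkQ
  let g : Fin n → (Fin r → ZMod p) := fun i => ψ (Pi.single i 1)
  refine ⟨((List.ofFn g : List (Fin r → ZMod p)) : Multiset (Fin r → ZMod p)), by simp, ?_⟩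
  rintro ⟨l, ⟨hne, hW, hle, hsum⟩, hlen⟩
  have hle' : (↑(l.map Prod.snd) : Multiset _) ≤ Multiset.map g (Finset.univ.val) := by
    have : (↑(List.ofFn g) : Multiset _) = Multiset.map g Finset.univ.val := by
      rw [List.ofFn_eq_map]; rfl
    rwa [this] at hle
  obtain ⟨q, hperm, hq⟩ := lemM g l Finset.univ.val hle'
  have hqnd : (q.map Prod.snd).Nodup := by
    have h1 : (↑(q.map Prod.snd) : Multiset (Fin n)).Nodup :=
      Multiset.nodup_of_le hq Finset.univ.nodup
    exact (Multiset.coe_nodup).1 h1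
  obtain ⟨hx1, hx2⟩ := xval (R := ZMod p) q hqnd
  set x : Fin n → ZMod p :=
    (q.map fun pr' => ((pr'.1 : ZMod p) • (Pi.single pr'.2 1 : Fin n → ZMod p))).sum with hxdef
  have hqlen : q.length = l.length := by
    have := hperm.length_eq
    simpa using this
  have hql : q ≠ [] := by
    intro h0
    rw [h0] at hqlen
    have := hlen.1
    simp at hqlen
    omega
  have hxC : x ∈ C := by
    have hψx : ψ x = 0 := by
      rw [hxdef, map_list_sum, List.map_map]
      have h2 : (⇑ψ ∘ fun pr' : ℤ × Fin n =>
          ((pr'.1 : ZMod p) • (Pi.single pr'.2 1 : Fin n → ZMod p)))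
          = fun pr' => pr'.1 • g pr'.2 := by
        funext pr
        simp only [Function.comp_apply, map_smul]
        rw [Int.cast_smul_eq_zsmul]
      rw [h2]
      have h3 : q.map (fun pr' => pr'.1 • g pr'.2)
          = (q.map fun y => (y.1, g y.2)).map
            (fun y : ℤ × (Fin r → ZMod p) => y.1 • y.2) := by
        rw [List.map_map]; rfl
      rw [h3, (hperm.map (fun y : ℤ × (Fin r → ZMod p) => y.1 • y.2)).sum_eq]
      exact hsum
    have h4 : C.mkQ x = 0 := by
      have h5 := hψx
      simp only [ψ, LinearMap.comp_apply, LinearEquiv.coe_coe] at h5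
      exact (LinearEquiv.map_eq_zero_iff e).1 h5
    rw [Submodule.mkQ_apply, Submodule.Quotient.mk_eq_zero] at h4
    exact h4
  have hx0 : x ≠ 0 := by
    obtain ⟨pr0, hpr0⟩ := List.exists_mem_of_ne_nil q hql
    have hmeml : (pr0.1, g pr0.2) ∈ l :=
      hperm.mem_iff.1 (List.mem_map_of_mem (f := fun y : ℤ × Fin n => (y.1, g y.2)) hpr0)
    have hw : pr0.1 ∈ Set.Icc 1 ((p : ℤ) - 1) := hW _ hmeml
    intro h0
    have h6 := hx1 pr0 hpr0
    rw [h0] at h6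
    exact castW_ne_zero p hw h6.symm
  have hnorm : hammingNorm x ≤ q.length := by
    have hsub : (Finset.filter (fun i => x i ≠ 0) Finset.univ)
        ⊆ (q.map Prod.snd).toFinset := by
      intro i hi
      rw [Finset.mem_filter] at hi
      rw [List.mem_toFinset]
      by_contra hmem
      exact hi.2 (hx2 i hmem)
    calc hammingNorm x = (Finset.filter (fun i => x i ≠ 0) Finset.univ).card := rfl
      _ ≤ (q.map Prod.snd).toFinset.card := Finset.card_le_card hsub
      _ ≤ (q.map Prod.snd).length := (q.map Prod.snd).toFinset_card_le
      _ = q.length := List.length_map _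
  have hge := hdist x hxC hx0
  have hld := hlen.2
  omega

end Main

/-- `s_{A,≤d}(C_p^r) - 1` equals the maximal `n` such that there
exists an `[n, n-r]_p`-code of minimum distance at least `d+1`; phrased in `ℕ∞`
as `s_{A,≤d}(C_p^r) = (sup of such n) + 1`, which also covers the infinite case. -/
theorem stmt13 (p : ℕ) (hp : p.Prime) (d r : ℕ) (hd : 1 ≤ d) (hr : 1 ≤ r) :
    sWle (Set.Icc 1 ((p : ℤ) - 1)) (Fin r → ZMod p) d =
      sSup {N : ℕ∞ | ∃ n : ℕ, N = (n : ℕ∞) ∧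
        ∃ C : Submodule (ZMod p) (Fin n → ZMod p),
          Module.finrank (ZMod p) C = n - r ∧
          ∀ c ∈ C, c ≠ 0 → d + 1 ≤ hammingNorm c} + 1 := by
  haveI : Fact p.Prime := ⟨hp⟩
  classical
  have hTset : {N : ℕ∞ | ∃ n : ℕ, N = (n : ℕ∞) ∧
      ∃ C : Submodule (ZMod p) (Fin n → ZMod p),
        Module.finrank (ZMod p) C = n - r ∧
        ∀ c ∈ C, c ≠ 0 → d + 1 ≤ hammingNorm c}
      = {N : ℕ∞ | ∃ n : ℕ, N = (n : ℕ∞) ∧ Good p d r n} := rfl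
  rw [hTset, sWle, sWL]
  have hA : ∀ S : Multiset (Fin r → ZMod p),
      ¬ HasWZeroSubsumLen (Set.Icc 1 ((p : ℤ) - 1)) S {t | 1 ≤ t ∧ t ≤ d} →
      Good p d r (Multiset.card S) := by
    intro S hno
    have hg : Good p d r S.toList.length := by
      apply seq_good p d r S.toList.length S.toList.get
      rw [List.ofFn_get, Multiset.coe_toList]
      exact hno
    rwa [Multiset.length_toList] at hg
  by_cases hbdd : ∃ m, ∀ n, Good p d r n → n ≤ m
  · obtain ⟨m, hm⟩ := hbdd
    set m₀ := Nat.findGreatest (Good p d r) m with hm₀def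
    have hrm₀ : r ≤ m₀ := Nat.le_findGreatest (hm r (good_r p d r)) (good_r p d r)
    have hGm₀ : Good p d r m₀ :=
      Nat.findGreatest_spec (hm r (good_r p d r)) (good_r p d r)
    have hmax : ∀ n, Good p d r n → n ≤ m₀ := fun n hn =>
      Nat.le_findGreatest (hm n hn) hn
    have hsup : sSup {N : ℕ∞ | ∃ n : ℕ, N = (n : ℕ∞) ∧ Good p d r n} = (m₀ : ℕ∞) := by
      apply le_antisymm
      · apply sSup_le
        rintro N ⟨n, rfl, hn⟩
        exact_mod_cast hmax n hn
      · exact le_sSup ⟨m₀, rfl, hGm₀⟩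
    rw [hsup]
    obtain ⟨Sm, hScard, hSno⟩ := good_seq p d r m₀ hrm₀ hGm₀
    apply le_antisymm
    · apply sInf_le
      refine ⟨m₀ + 1, by push_cast; ring, ?_⟩
      intro S hcard
      by_contra hno
      have := hmax _ (hA S hno)
      omega
    · apply le_sInf
      rintro N ⟨n, rfl, hPn⟩
      have hn : m₀ + 1 ≤ n := by
        by_contra hlt
        push_neg at hlt
        exact hSno (hPn Sm (by omega))
      calc ((m₀ : ℕ∞) + 1) = ((m₀ + 1 : ℕ) : ℕ∞) := by push_cast; ring
        _ ≤ (n : ℕ∞) := by exact_mod_cast hn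
  · push_neg at hbdd
    have hsup : sSup {N : ℕ∞ | ∃ n : ℕ, N = (n : ℕ∞) ∧ Good p d r n} = ⊤ := by
      rw [sSup_eq_top]
      intro b hb
      lift b to ℕ using hb.ne
      obtain ⟨n, hGn, hbn⟩ := hbdd b
      exact ⟨n, ⟨n, rfl, hGn⟩, by exact_mod_cast hbn⟩
    have hempty : {N : ℕ∞ | ∃ n : ℕ, N = (n : ℕ∞) ∧
        ∀ S : Multiset (Fin r → ZMod p), n ≤ Multiset.card S →
          HasWZeroSubsumLen (Set.Icc 1 ((p : ℤ) - 1)) S {t | 1 ≤ t ∧ t ≤ d}} = ∅ := by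
      rw [Set.eq_empty_iff_forall_notMem]
      rintro N ⟨n, rfl, hPn⟩
      obtain ⟨n', hGn', hn'⟩ := hbdd (max n r)
      obtain ⟨Sm, hScard, hSno⟩ := good_seq p d r n' (by omega) hGn'
      exact hSno (hPn Sm (by omega))
    rw [hempty, hsup, sInf_empty]
    rfl
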